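/- Let g > 1 and Z₀ > 0 be real numbers. The quadratic equation g·Z₀·ζ² − ((g+1)·Z₀ + (g−1))·ζ + Z₀ = 0 (equivalently, (ζ − 1)(g·ζ − 1) = (g−1)·ζ/Z₀) has two distinct real roots ζ₋ < ζ₊ which satisfy ζ₋·ζ₊ = 1/g, 0 < ζ₋ < 1/g, and ζ₊ > 1. -/
import Mathlib


/-- The characteristic quadratic `g·Z₀·ζ² − ((g+1)·Z₀ + (g−1))·ζ + Z₀ = 0`
(for `g > 1`, `Z₀ > 0`) has two distinct real roots `ζ₋ < ζ₊` with
`ζ₋·ζ₊ = 1/g`, `0 < ζ₋ < 1/g`, and `ζ₊ > 1`. -/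
theorem characteristic_equation_roots (g Z₀ : ℝ) (hg : 1 < g) (hZ₀ : 0 < Z₀) :
    ∃ ζm ζp : ℝ, ζm < ζp ∧
      g * Z₀ * ζm ^ 2 - ((g + 1) * Z₀ + (g - 1)) * ζm + Z₀ = 0 ∧
      g * Z₀ * ζp ^ 2 - ((g + 1) * Z₀ + (g - 1)) * ζp + Z₀ = 0 ∧
      (∀ ζ : ℝ, g * Z₀ * ζ ^ 2 - ((g + 1) * Z₀ + (g - 1)) * ζ + Z₀ = 0 →
        ζ = ζm ∨ ζ = ζp) ∧
      ζm * ζp = 1 / g ∧ 0 < ζm ∧ ζm < 1 / g ∧ 1 < ζp := by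
  set a : ℝ := g * Z₀ with ha
  set b : ℝ := (g + 1) * Z₀ + (g - 1) with hb
  have hapos : 0 < a := by positivity
  have hbpos : 0 < b := by nlinarith
  set D : ℝ := b ^ 2 - 4 * a * Z₀ with hD
  have hDpos : 0 < D := by
    have : D = (g - 1) ^ 2 * Z₀ ^ 2 + 2 * (g + 1) * (g - 1) * Z₀ + (g - 1) ^ 2 := by
      simp only [hD, ha, hb]; ring
    nlinarith
  set s : ℝ := Real.sqrt D with hs
  have hs2 : s ^ 2 = b ^ 2 - 4 * a * Z₀ := by rw [hs]; rw [Real.sq_sqrt hDpos.le]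
  have hspos : 0 < s := Real.sqrt_pos.mpr hDpos
  have hslt : s < b := by nlinarith
  have h2ab : 2 * a - b < s := by nlinarith
  have hdiff : (b - s) * (b + s) = 4 * a * Z₀ := by linear_combination -hs2
  have hfac : ∀ ζ : ℝ, a * (ζ - (b - s) / (2 * a)) * (ζ - (b + s) / (2 * a))
      = a * ζ ^ 2 - b * ζ + Z₀ := by
    intro ζ
    have h1 : a * (ζ - (b - s) / (2 * a)) * (ζ - (b + s) / (2 * a))
        = a * ζ ^ 2 - b * ζ + (b - s) * (b + s) / (4 * a) := by
      field_simp; ring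
    rw [h1, hdiff]
    field_simp
  refine ⟨(b - s) / (2 * a), (b + s) / (2 * a), ?_, ?_, ?_, ?_, ?_, ?_, ?_, ?_⟩
  · exact div_lt_div_of_pos_right (by linarith) (by positivity)
  · rw [← hfac]; ring
  · rw [← hfac]; ring
  · intro ζ hζ
    have key : a * (ζ - (b - s) / (2 * a)) * (ζ - (b + s) / (2 * a)) = 0 := by
      rw [hfac]; linarith
    rcases mul_eq_zero.mp key with h | h
    · rcases mul_eq_zero.mp h with h | h
      · exact absurd h hapos.ne'
      · left; linarith [sub_eq_zero.mp h]
    · right; linarith [sub_eq_zero.mp h]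
  · rw [div_mul_div_comm, hdiff, ha]
    rw [div_eq_div_iff (by positivity) (by positivity)]
    ring
  · exact div_pos (by linarith) (by positivity)
  · have hprod : (b - s) / (2 * a) * ((b + s) / (2 * a)) = 1 / g := by
      rw [div_mul_div_comm, hdiff, ha]
      rw [div_eq_div_iff (by positivity) (by positivity)]
      ring
    have hm : 0 < (b - s) / (2 * a) := div_pos (by linarith) (by positivity)
    have hp1 : 1 < (b + s) / (2 * a) := by
      rw [lt_div_iff₀ (by positivity)]; linarith
    calc (b - s) / (2 * a) = (b - s) / (2 * a) * 1 := by ring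
    _ < (b - s) / (2 * a) * ((b + s) / (2 * a)) := by
        exact mul_lt_mul_of_pos_left hp1 hm
    _ = 1 / g := hprod
  · rw [lt_div_iff₀ (by positivity)]; linarith
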